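/- Let X₁, X₂, … be i.i.d. mean-zero real random variables with partial sums Sₙ, and (aₙ) positive reals with aₙ/√n nondecreasing and tending to infinity. If limsup_{n→∞} |Sₙ|/aₙ < ∞ almost surely, then ∑ₙ P(|X₁| ≥ aₙ) < ∞. -/

import Mathlib

open MeasureTheory ProbabilityTheory Filter Set
open scoped ProbabilityTheory

lemma my_iIndepSet {Ω : Type*} [MeasurableSpace Ω] {μ : Measure Ω} [IsProbabilityMeasure μ]
    {X : ℕ → Ω → ℝ} (hX : ∀ n, Measurable (X n))
    (h : iIndepFun X μ)
    (B : ℕ → Set ℝ) (hB : ∀ n, MeasurableSet (B n)) :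
    iIndepSet (fun n => X n ⁻¹' B n) μ := by
  rw [iIndepSet_iff_meas_biInter (fun n => (hX n) (hB n))]
  intro s
  exact h.measure_inter_preimage_eq_mul s (sets := B) (fun i _ => hB i)


lemma aux_tail_top (g : ℕ → ENNReal) (hg1 : ∀ k, g k ≤ 1) (m : ℕ)
    (hsum : ∑' k, g k = ⊤) : (∑' k, g (k + m)) = ⊤ := by
  have h3 := Summable.sum_add_tsum_nat_add' (f := g) (k := m) ENNReal.summable
  by_contra hne
  have hhead : (∑ i ∈ Finset.range m, g i) ≠ ⊤ :=
    (ENNReal.sum_lt_top.2 fun i _ => lt_of_le_of_lt (hg1 _) ENNReal.one_lt_top).ne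
  exact (ENNReal.add_ne_top.2 ⟨hhead, hne⟩) (h3.trans hsum)

lemma aux_group_top (g : ℕ → ENNReal) (hg1 : ∀ k, g k ≤ 1)
    (hanti : ∀ j k, 1 ≤ j → j ≤ k → g k ≤ g j)
    (hsum : ∑' k, g k = ⊤) (m : ℕ) (hm : 1 ≤ m) :
    (∑' n, g (m * n)) = ⊤ := by
  haveI : NeZero m := ⟨by omega⟩
  have hgroup : (∑' k : ℕ, g (m * (k / m))) = m * ∑' n, g (m * n) := by
    have h1 : (∑' k : ℕ, g (m * (k / m))) = ∑' p : ℕ × Fin m, g (m * p.1) := by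
      rw [← (Nat.divModEquiv m).tsum_eq (fun p : ℕ × Fin m => g (m * p.1))]
      rfl
    rw [h1, ENNReal.tsum_prod' (f := fun p : ℕ × Fin m => g (m * p.1))]
    simp only [tsum_fintype, Finset.sum_const, Finset.card_univ, Fintype.card_fin,
      nsmul_eq_mul]
    rw [ENNReal.tsum_mul_left]
  have h2 : (∑' k : ℕ, g (k + m)) ≤ ∑' k : ℕ, g (m * (k / m)) := by
    calc (∑' k : ℕ, g (k + m))
        ≤ ∑' k : ℕ, g (m * ((k + m) / m)) := by
          apply ENNReal.tsum_le_tsum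
          intro k
          apply hanti
          · have h5 : 1 ≤ (k + m) / m := (Nat.one_le_div_iff (by omega)).2 (by omega)
            exact le_trans hm (Nat.le_mul_of_pos_right m (by omega))
          · exact Nat.mul_div_le _ _
      _ ≤ ∑' k : ℕ, g (m * (k / m)) :=
          ENNReal.tsum_comp_le_tsum_of_injective (f := fun k : ℕ => k + m)
            (add_left_injective m) (fun k : ℕ => g (m * (k / m)))
  have htail : (∑' k : ℕ, g (k + m)) = ⊤ := aux_tail_top g hg1 m hsum
  have h4 : (m : ENNReal) * (∑' n, g (m * n)) = ⊤ :=
    top_le_iff.1 (by rw [← hgroup]; exact htail ▸ h2)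
  rcases ENNReal.mul_eq_top.1 h4 with ⟨_, h⟩ | ⟨h, _⟩
  · exact h
  · exact absurd h (ENNReal.natCast_ne_top m)

theorem stmt_17 {Ω : Type*} [MeasureSpace Ω] [IsProbabilityMeasure (ℙ : Measure Ω)]
    (X : ℕ → Ω → ℝ) (hX : ∀ n, Measurable (X n))
    (hindep : iIndepFun X ℙ)
    (hident : ∀ n, Measure.map (X n) ℙ = Measure.map (X 0) ℙ)
    (hint : Integrable (X 0)) (hmean : (∫ ω, X 0 ω) = 0)
    (S : ℕ → Ω → ℝ) (hS : ∀ n ω, S n ω = ∑ i ∈ Finset.range n, X i ω)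
    (a : ℕ → ℝ) (hapos : ∀ n, 1 ≤ n → 0 < a n)
    (hmono : ∀ m n, 1 ≤ m → m ≤ n → a m / Real.sqrt m ≤ a n / Real.sqrt n)
    (htop : Tendsto (fun n => a n / Real.sqrt n) atTop atTop)
    (hbdd : ∀ᵐ ω, BddAbove (Set.range fun n => |S n ω| / a n)) :
    Summable (fun n => (ℙ {ω | a n ≤ |X 0 ω|}).toReal) := by
  classical
  -- monotonicity facts about `a`
  have amono : ∀ m n : ℕ, 1 ≤ m → m ≤ n → a m ≤ a n := by
    intro m n hm hmn
    have h1 := hmono m n hm hmn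
    have hsm : (0:ℝ) < Real.sqrt m := Real.sqrt_pos.2 (by exact_mod_cast hm)
    have hsn : (0:ℝ) < Real.sqrt n := Real.sqrt_pos.2 (by exact_mod_cast hm.trans hmn)
    have hss : Real.sqrt m ≤ Real.sqrt n := Real.sqrt_le_sqrt (by exact_mod_cast hmn)
    have h0 : 0 ≤ a n / Real.sqrt n := div_nonneg (hapos n (hm.trans hmn)).le hsn.le
    calc a m = a m / Real.sqrt m * Real.sqrt m := by field_simp
      _ ≤ a n / Real.sqrt n * Real.sqrt n := mul_le_mul h1 hss hsm.le h0
      _ = a n := by field_simp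
  have agrow : ∀ m n : ℕ, 1 ≤ m → 1 ≤ n → Real.sqrt m * a n ≤ a (m * n) := by
    intro m n hm hn
    have hmn : n ≤ m * n := Nat.le_mul_of_pos_left n (by omega)
    have h1 := hmono n (m * n) hn hmn
    have hsm : (0:ℝ) < Real.sqrt m := Real.sqrt_pos.2 (by exact_mod_cast hm)
    have hsn : (0:ℝ) < Real.sqrt n := Real.sqrt_pos.2 (by exact_mod_cast hn)
    have hsq : Real.sqrt (m * n : ℕ) = Real.sqrt m * Real.sqrt n := by
      push_cast
      exact Real.sqrt_mul (by positivity) _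
    have hspos : (0:ℝ) < Real.sqrt (m * n : ℕ) := by rw [hsq]; positivity
    calc Real.sqrt m * a n
        = Real.sqrt m * Real.sqrt n * (a n / Real.sqrt n) := by field_simp
      _ ≤ Real.sqrt m * Real.sqrt n * (a (m*n) / Real.sqrt (m*n : ℕ)) := by
          apply mul_le_mul_of_nonneg_left h1 (by positivity)
      _ = a (m * n) := by rw [hsq]; field_simp
  -- the tail distribution function
  set T : ℝ → ENNReal := fun t => ℙ {ω | t ≤ |X 0 ω|} with hTdef
  have hBset : ∀ t : ℝ, MeasurableSet {x : ℝ | t ≤ |x|} := fun t =>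
    (isClosed_le continuous_const continuous_abs).measurableSet
  have hTn : ∀ (n : ℕ) (t : ℝ), ℙ {ω | t ≤ |X n ω|} = T t := by
    intro n t
    have h1 : {ω | t ≤ |X n ω|} = X n ⁻¹' {x | t ≤ |x|} := rfl
    have h2 : {ω | t ≤ |X 0 ω|} = X 0 ⁻¹' {x | t ≤ |x|} := rfl
    simp only [hTdef, h1, h2,
      ← Measure.map_apply (hX n) (hBset t), ← Measure.map_apply (hX 0) (hBset t), hident n]
  have hTmono : ∀ s t : ℝ, s ≤ t → T t ≤ T s := fun s t hst =>
    measure_mono (fun ω hω => le_trans hst hω)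
  have hTle : ∀ t, T t ≤ 1 := fun t => prob_le_one
  apply ENNReal.summable_toReal
  intro hsum
  have hsum' : (∑' n, T (a n)) = ⊤ := hsum
  -- Step 1: for every m ≥ 1, ∑' n, T (a (m * n)) = ⊤
  have step1 : ∀ m : ℕ, 1 ≤ m → (∑' n, T (a (m * n))) = ⊤ := by
    intro m hm
    exact aux_group_top (fun k => T (a k)) (fun k => hTle _)
      (fun j k hj hjk => hTmono _ _ (amono j k hj hjk)) hsum' m hm
  -- Step 2: for every c > 0, ∑' n, T (c * a (n+1)) = ⊤
  have step2 : ∀ c : ℝ, 0 < c → (∑' n, T (c * a (n + 1))) = ⊤ := by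
    intro c hc
    set m : ℕ := ⌈c⌉₊ ^ 2 + 1 with hmdef
    have hm1 : 1 ≤ m := by omega
    have hcs : c ≤ Real.sqrt m := by
      have h1 : c ≤ (⌈c⌉₊ : ℝ) := Nat.le_ceil c
      have h2 : ((⌈c⌉₊ : ℝ)) = Real.sqrt ((⌈c⌉₊ : ℝ) ^ 2) := (Real.sqrt_sq (by positivity)).symm
      have h3 : Real.sqrt ((⌈c⌉₊ : ℝ) ^ 2) ≤ Real.sqrt m := by
        apply Real.sqrt_le_sqrt
        rw [hmdef]
        push_cast
        linarith
      linarith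
    have htail : (∑' n : ℕ, T (a (m * (n + 1)))) = ⊤ := by
      have := aux_tail_top (fun n => T (a (m * n))) (fun k => hTle _) 1 (step1 m hm1)
      simpa [Nat.add_comm] using this
    have hle : ∀ n : ℕ, T (a (m * (n + 1))) ≤ T (c * a (n + 1)) := by
      intro n
      apply hTmono
      have hg := agrow m (n + 1) hm1 (by omega)
      have hpos := hapos (n + 1) (by omega)
      nlinarith
    exact top_le_iff.1 (htail ▸ ENNReal.tsum_le_tsum hle)
  -- Step 3: Borel–Cantelli II gives frequent large values of X n
  have hae : ∀ k : ℕ, ∀ᵐ ω, ∃ᶠ n in atTop, ((k : ℝ) + 1) * a (n + 1) ≤ |X n ω| := by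
    intro k
    set c : ℝ := (k : ℝ) + 1 with hcdef
    set E : ℕ → Set Ω := fun n => X n ⁻¹' {x | c * a (n + 1) ≤ |x|} with hEdef
    have hmE : ∀ n, MeasurableSet (E n) := fun n => (hX n) (hBset _)
    have hiE : iIndepSet E ℙ := my_iIndepSet hX hindep _ (fun n => hBset _)
    have hsumE : (∑' n, ℙ (E n)) = ⊤ := by
      have heq : ∀ n, ℙ (E n) = T (c * a (n + 1)) := fun n => hTn n _
      simp_rw [heq]
      exact step2 c (by positivity)
    have h1 := measure_limsup_eq_one hmE hiE hsumE
    have h2 : ∀ᵐ ω, ω ∈ limsup E atTop :=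
      (mem_ae_iff_prob_eq_one (MeasurableSet.measurableSet_limsup hmE)).2 h1
    filter_upwards [h2] with ω hω
    rw [mem_limsup_iff_frequently_mem] at hω
    exact hω
  -- Step 4: contradiction with a.s. boundedness
  have hfinal : ∀ᵐ ω : Ω, False := by
    filter_upwards [hbdd, ae_all_iff.2 hae] with ω hb hfreq
    set M := sSup (Set.range fun n => |S n ω| / a n) with hMdef
    have hub : ∀ n, |S n ω| / a n ≤ M := fun n => le_csSup hb ⟨n, rfl⟩
    have hM0 : 0 ≤ M :=
      le_trans (div_nonneg (abs_nonneg _) (hapos 1 le_rfl).le) (hub 1)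
    have hSle : ∀ n, 1 ≤ n → |S n ω| ≤ M * a n := by
      intro n hn
      have h := hub n
      rw [div_le_iff₀ (hapos n hn)] at h
      linarith
    have hXle : ∀ n, |X n ω| ≤ 2 * M * a (n + 1) := by
      intro n
      have hXeq : X n ω = S (n + 1) ω - S n ω := by
        simp [hS, Finset.sum_range_succ]
      have h1 : |X n ω| ≤ |S (n + 1) ω| + |S n ω| := by
        rw [hXeq]; exact abs_sub _ _
      rcases Nat.eq_zero_or_pos n with rfl | hn
      · have h0 : S 0 ω = 0 := by simp [hS]
        have h2 := hSle 1 le_rfl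
        have h3 := hapos 1 le_rfl
        rw [h0, abs_zero] at h1
        nlinarith
      · have h2 := hSle n hn
        have h3 := hSle (n + 1) (by omega)
        have h4 : a n ≤ a (n + 1) := amono n (n + 1) hn (by omega)
        have h5 := hapos (n + 1) (by omega)
        nlinarith
    obtain ⟨n, hn⟩ := (hfreq ⌈2 * M⌉₊).exists
    have hpos := hapos (n + 1) (by omega)
    have hx := hXle n
    have hk : 2 * M ≤ (⌈2 * M⌉₊ : ℝ) := Nat.le_ceil _
    nlinarith
  rw [ae_iff] at hfinal
  simp at hfinal
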